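/- For every ℓ ∈ [0,∞), t ∈ ℝ, and u ∈ [0,1]: h_ℓ(tu) · exp(−(1−u²)σ²t²/2) ≤ h_ℓ(t). -/

import Mathlib

open scoped BigOperators

set_option maxHeartbeats 1600000

/-- `h_ℓ(tu) exp(−(1−u²)σ²t²/2) ≤ h_ℓ(t)` for `ℓ ≥ 0`, `u ∈ [0,1]`. -/
theorem stmt_10
    (n : ℕ) (hn : 2 ≤ n) (a : Fin n → Fin n → ℝ)
    (b : Fin n → Fin n → Fin n → Fin n → ℝ)
    (hb : ∀ j k r s, b j k r s = a j r - a k r - a j s + a k s)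
    (σ2 : ℝ)
    (hσ2 : σ2 = (∑ j, ∑ k, ∑ r, ∑ s,
      if j ≠ k ∧ r ≠ s then (b j k r s) ^ 2 else 0)
      / (4 * (n : ℝ) ^ 2 * ((n : ℝ) - 1)))
    (hσ2pos : 0 < σ2)
    (γ : ℝ → ℝ)
    (hγ : ∀ x, γ x = (∑ j, ∑ k, ∑ r, ∑ s,
      if j ≠ k ∧ r ≠ s then (b j k r s) ^ 2 * min 1 |x * b j k r s| else 0)
      / ((n : ℝ) ^ 2 * ((n : ℝ) - 1)))
    (κ : ℝ)
    (hκ : κ = sSup {y : ℝ | ∃ x : ℝ, x ≠ 0 ∧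
      y = (Real.cos x - 1 + x ^ 2 / 2) / |x| ^ 3})
    (h : ℝ → ℝ → ℝ)
    (hh : ∀ ℓ t, h ℓ t =
      min 1 (Real.exp (ℓ - ((n : ℝ) - ℓ - 1) / (4 * ((n : ℝ) - 1)) * t ^ 2 *
        (σ2 - γ (2 * κ * t) / 4))) * (if ℓ ≤ (n : ℝ) then 1 else 0))
    (ℓ : ℝ) (hℓ : 0 ≤ ℓ) (t : ℝ) (u : ℝ) (hu : u ∈ Set.Icc (0 : ℝ) 1) :
    h ℓ (t * u) * Real.exp (-(1 - u ^ 2) * σ2 * t ^ 2 / 2) ≤ h ℓ t := by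
  obtain ⟨hu0, hu1⟩ := hu
  by_cases hln : ℓ ≤ (n : ℝ)
  swap
  · rw [hh, hh, if_neg hln]
    simp
  have hn2 : (2:ℝ) ≤ (n:ℝ) := by exact_mod_cast hn
  have hN : (0:ℝ) < (n:ℝ)^2 * ((n:ℝ)-1) := by nlinarith
  set N := (n:ℝ)^2 * ((n:ℝ)-1) with hNdef
  set x := 2*κ*t with hx
  -- pointwise lemma
  have L : ∀ A : ℝ, 0 ≤ A →
      min 1 (A*u) ≤ min 1 A ∧ min 1 A - min 1 (A*u) ≤ 1 - u := by
    intro A hA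
    have h1 : A*u ≤ A := by nlinarith
    constructor
    · exact min_le_min le_rfl h1
    · rcases le_total A 1 with h2 | h2
      · rw [min_eq_right h2, min_eq_right (by nlinarith)]
        nlinarith
      · rw [min_eq_left h2]
        rcases le_total (A*u) 1 with h3 | h3
        · rw [min_eq_right h3]; nlinarith
        · rw [min_eq_left h3]; nlinarith
  have hAu : ∀ c : ℝ, |x*u*c| = |x * c| * u := by
    intro c
    rw [show x*u*c = (x*c)*u by ring, abs_mul, abs_of_nonneg hu0]
  have mono : ∀ F G : Fin n → Fin n → Fin n → Fin n → ℝ,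
      (∀ j k r s, F j k r s ≤ G j k r s) →
      (∑ j, ∑ k, ∑ r, ∑ s, F j k r s) ≤ ∑ j, ∑ k, ∑ r, ∑ s, G j k r s :=
    fun F G hFG => Finset.sum_le_sum fun j _ => Finset.sum_le_sum fun k _ =>
      Finset.sum_le_sum fun r _ => Finset.sum_le_sum fun s _ => hFG j k r s
  set T : ℝ := ∑ j, ∑ k, ∑ r, ∑ s,
      if j ≠ k ∧ r ≠ s then (b j k r s)^2 else 0 with hT
  set Nx : ℝ := ∑ j, ∑ k, ∑ r, ∑ s,
      if j ≠ k ∧ r ≠ s then (b j k r s)^2 * min 1 |x * b j k r s| else 0 with hNx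
  set Nu : ℝ := ∑ j, ∑ k, ∑ r, ∑ s,
      if j ≠ k ∧ r ≠ s then (b j k r s)^2 * min 1 |x*u * b j k r s| else 0 with hNu
  have hσ2T : σ2 = T / (4*N) := by rw [hσ2, hNdef]; ring_nf
  have hγx : γ x = Nx / N := by rw [hγ]
  have hγxu : γ (x*u) = Nu / N := by rw [hγ]
  have hNu0 : 0 ≤ Nu := by
    rw [hNu]
    refine Finset.sum_nonneg fun j _ => Finset.sum_nonneg fun k _ =>
      Finset.sum_nonneg fun r _ => Finset.sum_nonneg fun s _ => ?_
    split_ifs with hc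
    · have : (0:ℝ) ≤ min 1 |x*u * b j k r s| := le_min zero_le_one (abs_nonneg _)
      positivity
    · exact le_rfl
  have hii : Nu ≤ Nx := by
    rw [hNu, hNx]
    apply mono
    intro j k r s
    split_ifs with hc
    · rw [hAu]
      exact mul_le_mul_of_nonneg_left (L _ (abs_nonneg _)).1 (sq_nonneg _)
    · exact le_rfl
  have hiii : Nx ≤ T := by
    rw [hNx, hT]
    apply mono
    intro j k r s
    split_ifs with hc
    · have := mul_le_mul_of_nonneg_left (min_le_left 1 |x * b j k r s|) (sq_nonneg (b j k r s))
      simpa using this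
    · exact le_rfl
  have hiv : Nx ≤ Nu + (1-u)*T := by
    have step : Nx ≤ ∑ j, ∑ k, ∑ r, ∑ s,
        ((if j ≠ k ∧ r ≠ s then (b j k r s)^2 * min 1 |x*u * b j k r s| else 0)
          + (1-u)*(if j ≠ k ∧ r ≠ s then (b j k r s)^2 else 0)) := by
      rw [hNx]
      apply mono
      intro j k r s
      split_ifs with hc
      · rw [hAu]
        have hL := (L |x * b j k r s| (abs_nonneg _)).2
        nlinarith [mul_le_mul_of_nonneg_left
          (show min 1 |x * b j k r s| ≤ min 1 (|x * b j k r s| * u) + (1-u) by linarith)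
          (sq_nonneg (b j k r s))]
      · simp
    calc Nx ≤ _ := step
      _ = Nu + (1-u)*T := by
        have hmulT : (1-u)*T = ∑ j, ∑ k, ∑ r, ∑ s,
            (1-u)*(if j ≠ k ∧ r ≠ s then (b j k r s)^2 else 0) := by
          rw [hT]
          simp only [Finset.mul_sum]
        rw [hNu, hmulT]
        simp only [← Finset.sum_add_distrib]
  -- translate to γ facts
  have hΓu0 : 0 ≤ γ (x*u) := by rw [hγxu]; exact div_nonneg hNu0 hN.le
  have hΓmono : γ (x*u) ≤ γ x := by
    rw [hγx, hγxu]
    gcongr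
  have h4σ2 : 4*σ2 = T/N := by rw [hσ2T]; field_simp
  have hΓ4 : γ x ≤ 4*σ2 := by
    rw [hγx, h4σ2]
    gcongr
  have hΓd : γ x ≤ γ (x*u) + 4*(1-u)*σ2 := by
    have e : 4*(1-u)*σ2 = ((1-u)*T)/N := by rw [hσ2T]; field_simp
    rw [hγx, hγxu, e, ← add_div]
    gcongr
  clear_value T Nx Nu N
  clear hγx hγxu h4σ2 hσ2T hNu0 hii hiii hiv hT hNx hNu Nx Nu T hNdef hN hσ2 hγ hb hκ mono L hAu
  -- main inequality
  set cst := ((n:ℝ) - ℓ - 1) / (4*((n:ℝ)-1)) with hc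
  have hden : (0:ℝ) < 4*((n:ℝ)-1) := by linarith
  have hc1 : cst ≤ 1/4 := by
    rw [hc, div_le_iff₀ hden]; linarith
  have hc2 : -(1/4) ≤ cst := by
    rw [hc, le_div_iff₀ hden]; linarith
  set Gb := σ2 - γ x / 4 with hGb
  set Gu := σ2 - γ (x*u) / 4 with hGu
  have hGb0 : 0 ≤ Gb := by rw [hGb]; linarith
  have hGuσ : Gu ≤ σ2 := by rw [hGu]; linarith
  have hGle : Gb ≤ Gu := by rw [hGb, hGu]; linarith
  have hGd : Gu - Gb ≤ (1-u)*σ2 := by rw [hGb, hGu]; linarith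
  have hGu0 : 0 ≤ Gu := le_trans hGb0 hGle
  have h2 : cst*Gu ≤ σ2/4 := by
    nlinarith [mul_nonneg (show (0:ℝ) ≤ 1/4-cst by linarith) hGu0]
  have h2' : cst*Gu*(1-u^2) ≤ σ2/4*(1-u^2) :=
    mul_le_mul_of_nonneg_right h2 (by nlinarith)
  have h1 : cst*(Gb-Gu) ≤ (1/4)*(Gu-Gb) := by
    nlinarith [mul_nonneg (show (0:ℝ) ≤ 1/4+cst by linarith) (show (0:ℝ) ≤ Gu-Gb by linarith)]
  have h1'' : (1-u)*σ2 ≤ (1-u^2)*σ2 := by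
    nlinarith [mul_nonneg (mul_nonneg hu0 (show (0:ℝ) ≤ 1-u by linarith)) hσ2pos.le]
  have key : cst*(Gb - u^2*Gu) ≤ (1-u^2)*σ2/2 := by nlinarith [h1, h2', h1'', hGd]
  have hexp : (ℓ - cst*(t*u)^2*Gu) + (-(1-u^2)*σ2*t^2/2) ≤ ℓ - cst*t^2*Gb := by
    nlinarith [mul_le_mul_of_nonneg_left key (sq_nonneg t)]
  -- assemble
  rw [hh, hh, if_pos hln, mul_one, mul_one,
    show 2*κ*(t*u) = x*u by rw [hx]; ring, ← hx, ← hGb, ← hGu, ← hc]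
  refine le_min ?_ ?_
  · have e1 : Real.exp (-(1-u^2)*σ2*t^2/2) ≤ 1 := by
      rw [Real.exp_le_one_iff]
      nlinarith [mul_nonneg (mul_nonneg (show (0:ℝ) ≤ 1-u^2 by nlinarith) hσ2pos.le) (sq_nonneg t)]
    calc min 1 (Real.exp (ℓ - cst * (t*u)^2 * Gu)) * Real.exp (-(1-u^2)*σ2*t^2/2)
        ≤ 1 * 1 := mul_le_mul (min_le_left _ _) e1 (Real.exp_pos _).le zero_le_one
      _ = 1 := mul_one 1
  · calc min 1 (Real.exp (ℓ - cst * (t*u)^2 * Gu)) * Real.exp (-(1-u^2)*σ2*t^2/2)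
        ≤ Real.exp (ℓ - cst * (t*u)^2 * Gu) * Real.exp (-(1-u^2)*σ2*t^2/2) :=
          mul_le_mul_of_nonneg_right (min_le_right _ _) (Real.exp_pos _).le
      _ = Real.exp ((ℓ - cst * (t*u)^2 * Gu) + (-(1-u^2)*σ2*t^2/2)) := (Real.exp_add _ _).symm
      _ ≤ Real.exp (ℓ - cst * t^2 * Gb) := Real.exp_le_exp.mpr hexp
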